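/- If a compact set S in ℝ^d is ρ,h-cone-convex (i.e., for every boundary point x there exists an open finite cone with vertex x, opening angle ρ and height h contained in the complement of S), then the Lebesgue measure of the boundary of S is zero. -/

import Mathlib

open MeasureTheory Metric Set Filter Topology

noncomputable section

/-- The open finite cone with vertex `x`, axis `ξ`, opening angle `ρ` and height `h`. -/
def fcone (d : ℕ) (ρ h : ℝ) (x ξ : EuclideanSpace ℝ (Fin d)) :
    Set (EuclideanSpace ℝ (Fin d)) :=
  {z | z ≠ x ∧ (inner ℝ ξ (‖z - x‖⁻¹ • (z - x)) : ℝ) > Real.cos (ρ / 2)} ∩ Metric.ball x h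

/-- `S` is `ρ,h`-cone-convex. -/
def ConeConvex (d : ℕ) (ρ h : ℝ) (S : Set (EuclideanSpace ℝ (Fin d))) : Prop :=
  ∀ x ∈ frontier S, ∃ ξ : EuclideanSpace ℝ (Fin d), ‖ξ‖ = 1 ∧ fcone d ρ h x ξ ⊆ Sᶜ

/-- The `ρ,h`-cone-convex hull by complement. -/
def cccHull (d : ℕ) (ρ h : ℝ) (S : Set (EuclideanSpace ℝ (Fin d))) :
    Set (EuclideanSpace ℝ (Fin d)) :=
  ⋂₀ {A | ∃ y ξ : EuclideanSpace ℝ (Fin d),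
      ‖ξ‖ = 1 ∧ fcone d ρ h y ξ ∩ S = ∅ ∧ A = (fcone d ρ h y ξ)ᶜ}

/-- The `ρ,h`-cone-convex hull: intersection of all compact `ρ,h`-cone-convex supersets. -/
def ccHull (d : ℕ) (ρ h : ℝ) (S : Set (EuclideanSpace ℝ (Fin d))) :
    Set (EuclideanSpace ℝ (Fin d)) :=
  ⋂₀ {B | S ⊆ B ∧ IsCompact B ∧ B.Nonempty ∧ ConeConvex d ρ h B}

/-- A small ball sits inside the finite cone. -/
lemma ball_subset_fcone {d : ℕ} {ρ h : ℝ} (hρ : ρ ∈ Set.Ioc 0 Real.pi)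
    {ε : ℝ} (hε0 : 0 < ε) (hε1 : ε < 1)
    (hcos : Real.cos (ρ / 2) * (1 + ε) < 1 - ε)
    (x ξ : EuclideanSpace ℝ (Fin d)) (hξ : ‖ξ‖ = 1)
    {r : ℝ} (hr : 0 < r) (hrh : r ≤ h) :
    ball (x + (r / 2) • ξ) (ε * (r / 2)) ⊆ fcone d ρ h x ξ ∩ ball x r := by
  intro z hz
  set t : ℝ := r / 2 with ht
  have ht0 : 0 < t := by positivity
  set w : EuclideanSpace ℝ (Fin d) := z - (x + t • ξ) with hw
  have hwlt : ‖w‖ < ε * t := by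
    simpa [hw, dist_eq_norm] using hz
  have hv : z - x = t • ξ + w := by
    simp [hw]; abel
  have hvnorm : ‖z - x‖ < t * (1 + ε) := by
    calc ‖z - x‖ ≤ ‖t • ξ‖ + ‖w‖ := by rw [hv]; exact norm_add_le _ _
    _ = t + ‖w‖ := by rw [norm_smul, hξ]; simp [abs_of_pos ht0]
    _ < t + ε * t := by linarith
    _ = t * (1 + ε) := by ring
  have hinner : (inner ℝ ξ (z - x) : ℝ) > t * (1 - ε) := by
    have h1 : (inner ℝ ξ (z - x) : ℝ) = t + inner ℝ ξ w := by
      rw [hv, inner_add_right, real_inner_smul_right, real_inner_self_eq_norm_sq, hξ]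
      ring
    have h2 : |(inner ℝ ξ w : ℝ)| ≤ ‖w‖ := by
      calc |(inner ℝ ξ w : ℝ)| ≤ ‖ξ‖ * ‖w‖ := abs_real_inner_le_norm ξ w
      _ = ‖w‖ := by rw [hξ, one_mul]
    have := (abs_le.1 h2).1
    rw [h1]; nlinarith
  have hinnerpos : (0:ℝ) < inner ℝ ξ (z - x) := by nlinarith
  have hzne : z ≠ x := by
    intro hzx
    rw [hzx] at hinnerpos
    simp at hinnerpos
  have hznorm0 : 0 < ‖z - x‖ := by
    rw [norm_pos_iff]
    exact sub_ne_zero_of_ne hzne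
  have hcos0 : 0 ≤ Real.cos (ρ / 2) := by
    apply Real.cos_nonneg_of_mem_Icc
    constructor <;> [linarith [hρ.1, Real.pi_pos]; linarith [hρ.2]]
  have hang : (inner ℝ ξ (‖z - x‖⁻¹ • (z - x)) : ℝ) > Real.cos (ρ / 2) := by
    rw [real_inner_smul_right]
    rw [gt_iff_lt, ← div_eq_inv_mul, lt_div_iff₀ hznorm0]
    calc Real.cos (ρ / 2) * ‖z - x‖ ≤ Real.cos (ρ / 2) * (t * (1 + ε)) := by
          apply mul_le_mul_of_nonneg_left hvnorm.le hcos0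
    _ < t * (1 - ε) := by nlinarith
    _ < (inner ℝ ξ (z - x) : ℝ) := hinner
  have hzball : z ∈ ball x r := by
    rw [mem_ball, dist_eq_norm]
    calc ‖z - x‖ < t * (1 + ε) := hvnorm
    _ < r := by rw [ht]; nlinarith
  refine ⟨⟨⟨hzne, hang⟩, ?_⟩, hzball⟩
  exact ball_subset_ball hrh hzball

theorem stmt_0 {d : ℕ} {ρ h : ℝ} (hρ : ρ ∈ Set.Ioc 0 Real.pi) (hh : 0 < h)
    (S : Set (EuclideanSpace ℝ (Fin d))) (hS : IsCompact S)
    (hcc : ConeConvex d ρ h S) :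
    volume (frontier S) = 0 := by
  rcases Nat.eq_zero_or_pos d with rfl | hd
  · -- dimension 0: the space is a subsingleton, the frontier is empty
    haveI : Subsingleton (EuclideanSpace ℝ (Fin 0)) := by
      constructor; intro a b; ext i; exact i.elim0
    rcases Set.eq_empty_or_nonempty S with rfl | hne
    · simp
    · have : S = Set.univ := hne.eq_univ
      rw [this]; simp
  · haveI : Nontrivial (EuclideanSpace ℝ (Fin d)) := by
      apply Module.nontrivial_of_finrank_pos (R := ℝ)
      rw [finrank_euclideanSpace_fin]
      exact hd
    set c := Real.cos (ρ / 2) with hc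
    have hcos0 : 0 ≤ c := by
      apply Real.cos_nonneg_of_mem_Icc
      constructor <;> [linarith [hρ.1, Real.pi_pos]; linarith [hρ.2]]
    have hclt1 : c < 1 := by
      have := Real.cos_lt_cos_of_nonneg_of_le_pi (x := 0) (y := ρ / 2) le_rfl
        (by linarith [hρ.2, Real.pi_pos]) (by linarith [hρ.1])
      rw [Real.cos_zero] at this
      linarith
    set ε : ℝ := (1 - c) / 4 with hε
    have hε0 : 0 < ε := by rw [hε]; linarith
    have hε1 : ε < 1 := by rw [hε]; linarith
    have hcos : c * (1 + ε) < 1 - ε := by rw [hε]; nlinarith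
    -- the volume fraction of the small ball
    set θ : ℝ := (ε / 2) ^ d with hθ
    have hθ0 : 0 < θ := by positivity
    have hθ1 : θ < 1 := by
      apply pow_lt_one₀ (by positivity) (by linarith) (by omega)
    -- density argument
    by_contra hpos
    have hfr : frontier S ⊆ S := hS.isClosed.frontier_subset
    have hdens := Besicovitch.ae_tendsto_measure_inter_div (volume
      (α := EuclideanSpace ℝ (Fin d))) S
    rw [ae_iff] at hdens
    have hkey : ∀ x ∈ frontier S,
        ¬ Tendsto (fun r => volume (S ∩ closedBall x r) / volume (closedBall x r))
          (𝓝[>] 0) (𝓝 1) := by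
      intro x hx hT
      obtain ⟨ξ, hξ, hsub⟩ := hcc x hx
      have hbound : ∀ r ∈ Set.Ioc (0:ℝ) h,
          volume (S ∩ closedBall x r) / volume (closedBall x r)
            ≤ ENNReal.ofReal (1 - θ) := by
        intro r hrmem
        obtain ⟨hr0, hrh⟩ := hrmem
        set B := ball (x + (r / 2) • ξ) (ε * (r / 2)) with hB
        have hBsub : B ⊆ fcone d ρ h x ξ ∩ ball x r :=
          ball_subset_fcone hρ hε0 hε1 hcos x ξ hξ hr0 hrh
        have hBS : B ⊆ Sᶜ := fun z hz => hsub (hBsub hz).1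
        have hBcb : B ⊆ closedBall x r := fun z hz =>
          ball_subset_closedBall (hBsub hz).2
        have hdisj : Disjoint (S ∩ closedBall x r) B :=
          Set.disjoint_left.2 fun z hz hzB => (hBS hzB) hz.1
        have hunion : volume (S ∩ closedBall x r) + volume B
            = volume ((S ∩ closedBall x r) ∪ B) :=
          (measure_union hdisj measurableSet_ball).symm
        have hle : volume (S ∩ closedBall x r) + volume B
            ≤ volume (closedBall x r) := by
          rw [hunion]
          exact measure_mono (Set.union_subset Set.inter_subset_right hBcb)
        -- compute volumes
        have hvolB : volume B = ENNReal.ofReal θ * volume (closedBall x r) := by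
          rw [hB, Measure.addHaar_ball _ _ (by positivity : (0:ℝ) ≤ ε * (r/2)),
            Measure.addHaar_closedBall _ _ hr0.le, finrank_euclideanSpace_fin]
          rw [← mul_assoc, ← ENNReal.ofReal_mul hθ0.le]
          congr 2
          rw [hθ]
          rw [← mul_pow]
          ring_nf
        have hcbfin : volume (closedBall x r) ≠ ⊤ :=
          (measure_closedBall_lt_top).ne
        have hBfin : volume B ≠ ⊤ := by
          rw [hvolB]
          exact ENNReal.mul_ne_top ENNReal.ofReal_ne_top hcbfin
        have h2 : volume (S ∩ closedBall x r)
            ≤ volume (closedBall x r) - ENNReal.ofReal θ * volume (closedBall x r) := by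
          apply ENNReal.le_sub_of_add_le_right (by rw [← hvolB]; exact hBfin)
          rw [← hvolB]
          exact hle
        have h3 : volume (closedBall x r) - ENNReal.ofReal θ * volume (closedBall x r)
            = ENNReal.ofReal (1 - θ) * volume (closedBall x r) := by
          rw [ENNReal.ofReal_sub _ hθ0.le, ENNReal.ofReal_one,
            ENNReal.sub_mul (fun _ _ => hcbfin), one_mul]
        apply ENNReal.div_le_of_le_mul
        rw [← h3]
        exact h2
      have hlt1 : ENNReal.ofReal (1 - θ) < 1 := by
        rw [← ENNReal.ofReal_one]
        exact ENNReal.ofReal_lt_ofReal_iff_of_nonneg (by linarith) |>.2 (by linarith)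
      have hev1 : ∀ᶠ r in 𝓝[>] (0:ℝ), ENNReal.ofReal (1 - θ)
          < volume (S ∩ closedBall x r) / volume (closedBall x r) :=
        hT.eventually (eventually_gt_nhds hlt1)
      have hev2 : ∀ᶠ r in 𝓝[>] (0:ℝ), r ∈ Set.Ioc (0:ℝ) h :=
        by filter_upwards [Ioc_mem_nhdsGT_of_mem ⟨le_rfl, hh⟩] with r hr using hr
      obtain ⟨r, hr1, hr2⟩ := (hev1.and hev2).exists
      exact absurd (hbound r hr2) (not_le.2 hr1)
    have hsub2 : frontier S ⊆ {x | ¬ Tendsto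
        (fun r => volume (S ∩ closedBall x r) / volume (closedBall x r))
        (𝓝[>] 0) (𝓝 1)} := hkey
    have h0 : (volume.restrict S) (frontier S) = 0 :=
      measure_mono_null hsub2 hdens
    rw [Measure.restrict_apply isClosed_frontier.measurableSet,
      Set.inter_eq_self_of_subset_left hfr] at h0
    exact hpos h0
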